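/- Let d and h be positive integers with 2h < ⌈(d+2)/2⌉. Then there exists a binary form F ∈ ℂ[x₀, x₁], homogeneous of degree d, with srk(F) ≤ h, such that, setting k = ⌊(d+1)/2⌋, the span of the k-th order partial derivatives of the degree-(d+1) form x₀F has dimension at least 2h, i.e. dim H_{∂^k(x₀F)} ≥ 2h. (Equivalently, the middle catalecticant, or Hankel, matrix of x₀F has rank at least 2h, so x₀F does not lie in the (2h−1)-st secant variety of the rational normal curve of degree d+1, while F lies in the h-th secant variety of the rational normal curve of degree d.) -/

import Mathlib

open MvPolynomial

/-- Iterated partial derivative of a polynomial along a list of variables. -/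
noncomputable def derivList {σ : Type*} (l : List σ) (F : MvPolynomial σ ℂ) :
    MvPolynomial σ ℂ :=
  l.foldl (fun G i => MvPolynomial.pderiv i G) F

/-- `Hspan s F` is the linear span of all `s`-th order partial derivatives of `F`. -/
noncomputable def Hspan {σ : Type*} (s : ℕ) (F : MvPolynomial σ ℂ) :
    Submodule ℂ (MvPolynomial σ ℂ) :=
  Submodule.span ℂ {P | ∃ l : List σ, l.length = s ∧ P = derivList l F}

/-- The symmetric (Waring) rank of `F` with respect to degree `d` decompositions. -/
noncomputable def srk {σ : Type*} (d : ℕ) (F : MvPolynomial σ ℂ) : ℕ :=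
  sInf {h | ∃ c : Fin h → ℂ, ∃ L : Fin h → MvPolynomial σ ℂ,
    (∀ i, (L i).IsHomogeneous 1) ∧ F = ∑ i, c i • (L i) ^ d}

/- ## Auxiliary material -/

open Complex

noncomputable def mexp (p q : ℕ) : Fin 2 →₀ ℕ := Finsupp.single 0 p + Finsupp.single 1 q

@[simp] lemma mexp_apply0 (p q : ℕ) : mexp p q 0 = p := by
  simp [mexp, Finsupp.single_apply]
@[simp] lemma mexp_apply1 (p q : ℕ) : mexp p q 1 = q := by
  simp [mexp, Finsupp.single_apply]
lemma mexp_sub0 {p : ℕ} (q : ℕ) (hp : 1 ≤ p) :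
    mexp p q - Finsupp.single 0 1 = mexp (p-1) q := by
  ext a; rw [Finsupp.tsub_apply]; fin_cases a <;> simp [mexp, Finsupp.single_apply]
lemma mexp_sub1 (p : ℕ) {q : ℕ} (hq : 1 ≤ q) :
    mexp p q - Finsupp.single 1 1 = mexp p (q-1) := by
  ext a; rw [Finsupp.tsub_apply]; fin_cases a <;> simp [mexp, Finsupp.single_apply]
lemma mexp_degree (p q : ℕ) : (mexp p q).degree = p + q := by
  rw [Finsupp.degree_apply, Finset.sum_subset (Finset.subset_univ _) (by intro x _ hx; simpa using hx)]
  simp [Fin.sum_univ_two, mexp, Finsupp.single_apply]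

lemma derivList_cons {σ : Type*} (i : σ) (l : List σ) (G : MvPolynomial σ ℂ) :
    derivList (i :: l) G = derivList l (pderiv i G) := rfl

lemma derivList_append {σ : Type*} (l₁ l₂ : List σ) (G : MvPolynomial σ ℂ) :
    derivList (l₁ ++ l₂) G = derivList l₂ (derivList l₁ G) := by
  unfold derivList; rw [List.foldl_append]

lemma derivList_replicate {σ : Type*} (n : ℕ) (i : σ) (G : MvPolynomial σ ℂ) :
    derivList (List.replicate n i) G = (⇑(pderiv i))^[n] G := by
  induction n generalizing G with
  | zero => rfl
  | succ n ih =>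
    rw [List.replicate_succ, derivList_cons, ih, Function.iterate_succ_apply]

lemma iterate_pderiv_sum {σ ι : Type*} (i : σ) (n : ℕ) (s : Finset ι)
    (f : ι → MvPolynomial σ ℂ) :
    (⇑(pderiv i))^[n] (∑ j ∈ s, f j) = ∑ j ∈ s, (⇑(pderiv i))^[n] (f j) := by
  induction n with
  | zero => simp
  | succ n ih =>
    rw [Function.iterate_succ_apply', ih, map_sum]
    exact Finset.sum_congr rfl fun x _ => (Function.iterate_succ_apply' _ _ _).symm

lemma iterate_pderiv0 (a p q : ℕ) (c : ℂ) :
    (⇑(pderiv (R := ℂ) (0 : Fin 2)))^[a] (monomial (mexp p q) c)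
      = monomial (mexp (p - a) q) (c * (p.descFactorial a : ℂ)) := by
  induction a with
  | zero => simp
  | succ a ih =>
    rw [Function.iterate_succ_apply', ih, pderiv_monomial, mexp_apply0]
    rcases Nat.lt_or_ge p (a+1) with hpa | hpa
    · have h0 : p - a = 0 := by omega
      have h2 : p.descFactorial (a+1) = 0 := Nat.descFactorial_eq_zero_iff_lt.mpr (by omega)
      simp [h0, h2]
    · rw [mexp_sub0 q (by omega), Nat.descFactorial_succ]
      have : p - a - 1 = p - (a+1) := by omega
      rw [this]
      push_cast
      ring_nf

lemma iterate_pderiv1 (b p q : ℕ) (c : ℂ) :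
    (⇑(pderiv (R := ℂ) (1 : Fin 2)))^[b] (monomial (mexp p q) c)
      = monomial (mexp p (q - b)) (c * (q.descFactorial b : ℂ)) := by
  induction b with
  | zero => simp
  | succ b ih =>
    rw [Function.iterate_succ_apply', ih, pderiv_monomial, mexp_apply1]
    rcases Nat.lt_or_ge q (b+1) with hqb | hqb
    · have h0 : q - b = 0 := by omega
      have h2 : q.descFactorial (b+1) = 0 := Nat.descFactorial_eq_zero_iff_lt.mpr (by omega)
      simp [h0, h2]
    · rw [mexp_sub1 p (by omega), Nat.descFactorial_succ]
      have : q - b - 1 = q - (b+1) := by omega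
      rw [this]
      push_cast
      ring_nf

noncomputable def chi (n d j : ℕ) : ℂ := if n ∣ j then (d.choose j : ℂ) else 0

noncomputable def Fpoly (n d : ℕ) : MvPolynomial (Fin 2) ℂ :=
  ∑ j ∈ Finset.range (d+1), monomial (mexp (d-j) j) (chi n d j)

lemma expand_pow (d : ℕ) (z : ℂ) :
    (X 0 + C z * X 1 : MvPolynomial (Fin 2) ℂ)^d
      = ∑ j ∈ Finset.range (d+1), monomial (mexp (d-j) j) (z^j * (d.choose j : ℂ)) := by
  rw [add_comm (X 0), add_pow]
  refine Finset.sum_congr rfl fun j hj => ?_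
  rw [mul_pow, ← C_pow, X_pow_eq_monomial, X_pow_eq_monomial, C_mul_monomial]
  rw [show ((d.choose j : ℕ) : MvPolynomial (Fin 2) ℂ) = C ((d.choose j : ℕ) : ℂ) by
    simp]
  rw [monomial_mul]
  rw [mul_comm _ (C _), C_mul_monomial, mexp, add_comm (Finsupp.single 0 _)]
  ring_nf

lemma root_sum (h j : ℕ) (hh : 0 < h) :
    ∑ i ∈ Finset.range h, ((Complex.exp (2 * Real.pi * I / h))^j)^i
      = if h ∣ j then (h : ℂ) else 0 := by
  have hprim := Complex.isPrimitiveRoot_exp h hh.ne'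
  by_cases hd : h ∣ j
  · rw [if_pos hd, (hprim.pow_eq_one_iff_dvd j).mpr hd]
    simp
  · rw [if_neg hd]
    have hne : (Complex.exp (2 * Real.pi * I / h))^j ≠ 1 :=
      fun e => hd ((hprim.pow_eq_one_iff_dvd j).mp e)
    rw [geom_sum_eq hne]
    have : ((Complex.exp (2 * Real.pi * I / h))^j)^h = 1 := by
      rw [pow_right_comm, hprim.pow_eq_one, one_pow]
    rw [this, sub_self, zero_div]

lemma key_sum (d h : ℕ) (hh : 0 < h) :
    ∑ i : Fin h, (X 0 + C ((Complex.exp (2 * Real.pi * I / h))^(i:ℕ)) * X 1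
      : MvPolynomial (Fin 2) ℂ)^d = (h:ℂ) • Fpoly h d := by
  set ζ := Complex.exp (2 * Real.pi * I / h) with hζ
  calc ∑ i : Fin h, (X 0 + C (ζ^(i:ℕ)) * X 1 : MvPolynomial (Fin 2) ℂ)^d
      = ∑ i : Fin h, ∑ j ∈ Finset.range (d+1),
          monomial (mexp (d-j) j) ((ζ^(i:ℕ))^j * (d.choose j : ℂ)) := by
        exact Finset.sum_congr rfl fun i _ => expand_pow d _
    _ = ∑ j ∈ Finset.range (d+1), ∑ i ∈ Finset.range h,
          monomial (mexp (d-j) j) ((ζ^j)^i * (d.choose j : ℂ)) := by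
        rw [Finset.sum_comm]
        refine Finset.sum_congr rfl fun j _ => ?_
        rw [← Fin.sum_univ_eq_sum_range
          (fun i => monomial (mexp (d-j) j) ((ζ^j)^i * (d.choose j : ℂ)))]
        refine Finset.sum_congr rfl fun i _ => ?_
        rw [← pow_mul, mul_comm (i:ℕ) j, pow_mul]
    _ = (h:ℂ) • Fpoly h d := by
        rw [Fpoly, Finset.smul_sum]
        refine Finset.sum_congr rfl fun j _ => ?_
        rw [← map_sum, ← Finset.sum_mul, root_sum h j hh, smul_monomial]
        congr 1
        rw [chi]
        split_ifs <;> simp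

lemma Fpoly_homog (n d : ℕ) : (Fpoly n d).IsHomogeneous d := by
  apply IsHomogeneous.sum
  intro j hj
  apply isHomogeneous_monomial
  rw [mexp_degree]
  simp only [Finset.mem_range] at hj
  omega

lemma srk_Fpoly_le (d h : ℕ) (hh : 0 < h) : srk d (Fpoly h d) ≤ h := by
  have hL : ∀ i : Fin h, ((X 0 + C ((Complex.exp (2 * Real.pi * I / h))^(i:ℕ)) * X 1 :
      MvPolynomial (Fin 2) ℂ)).IsHomogeneous 1 := by
    intro i
    have h2 : ((C ((Complex.exp (2 * Real.pi * I / h))^(i:ℕ)) * X 1 :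
        MvPolynomial (Fin 2) ℂ)).IsHomogeneous 1 := by
      simpa using (isHomogeneous_C (Fin 2)
        ((Complex.exp (2 * Real.pi * I / h))^(i:ℕ))).mul (isHomogeneous_X ℂ 1)
    exact (isHomogeneous_X ℂ 0).add h2
  have hFeq : Fpoly h d = ∑ i : Fin h,
      (h:ℂ)⁻¹ • (X 0 + C ((Complex.exp (2 * Real.pi * I / h))^(i:ℕ)) * X 1 :
        MvPolynomial (Fin 2) ℂ) ^ d := by
    rw [← Finset.smul_sum, key_sum d h hh, smul_smul,
      inv_mul_cancel₀ (by exact_mod_cast hh.ne' : (h:ℂ) ≠ 0), one_smul]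
  exact Nat.sInf_le ⟨fun _ => (h:ℂ)⁻¹,
    fun i => X 0 + C ((Complex.exp (2 * Real.pi * I / h))^(i:ℕ)) * X 1, hL, hFeq⟩

lemma X0_mul_Fpoly (n d : ℕ) :
    (X 0 : MvPolynomial (Fin 2) ℂ) * Fpoly n d
      = ∑ j ∈ Finset.range (d+1), monomial (mexp (d+1-j) j) (chi n d j) := by
  rw [Fpoly, Finset.mul_sum]
  refine Finset.sum_congr rfl fun j hj => ?_
  simp only [Finset.mem_range] at hj
  rw [show (X 0 : MvPolynomial (Fin 2) ℂ) = monomial (Finsupp.single 0 1) 1 by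
    rw [← X_pow_eq_monomial, pow_one], monomial_mul, one_mul]
  congr 1
  rw [mexp, mexp, ← add_assoc, ← Finsupp.single_add,
    show 1 + (d - j) = d + 1 - j by omega]

lemma Dpoly_eq (n d k b : ℕ) (hb : b ≤ k) :
    derivList (List.replicate (k-b) 0 ++ List.replicate b 1)
        ((X 0 : MvPolynomial (Fin 2) ℂ) * Fpoly n d)
      = ∑ j ∈ Finset.range (d+1), monomial (mexp (d+1-j-(k-b)) (j-b))
          (chi n d j * ((d+1-j).descFactorial (k-b) : ℂ) * ((j).descFactorial b : ℂ)) := by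
  rw [derivList_append, derivList_replicate, derivList_replicate, X0_mul_Fpoly,
    iterate_pderiv_sum]
  rw [Finset.sum_congr rfl (fun j _ => iterate_pderiv0 (k-b) (d+1-j) j (chi n d j)),
    iterate_pderiv_sum]
  refine Finset.sum_congr rfl fun j _ => ?_
  rw [iterate_pderiv1]

lemma coeff_Dpoly (n d k b s : ℕ) (hb : b ≤ k) (hsb : s + b ≤ d) (hs : s + k ≤ d + 1) :
    coeff (mexp (d+1-k-s) s)
        (derivList (List.replicate (k-b) 0 ++ List.replicate b 1)
          ((X 0 : MvPolynomial (Fin 2) ℂ) * Fpoly n d))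
      = chi n d (s+b) * ((d+1-(s+b)).descFactorial (k-b) : ℂ) * ((s+b).descFactorial b : ℂ) := by
  rw [Dpoly_eq n d k b hb, MvPolynomial.coeff_sum]
  rw [Finset.sum_eq_single (s+b)]
  · have hex : mexp (d+1-(s+b)-(k-b)) ((s+b)-b) = mexp (d+1-k-s) s := by
      rw [show (s+b)-b = s by omega, show d+1-(s+b)-(k-b) = d+1-k-s by omega]
    rw [coeff_monomial, if_pos hex]
  · intro j hj hne
    rcases Nat.lt_or_ge j b with hjb | hjb
    · have : (j).descFactorial b = 0 := Nat.descFactorial_eq_zero_iff_lt.mpr hjb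
      simp [this]
    · rw [coeff_monomial, if_neg]
      intro he
      have h2 := DFunLike.congr_fun he 1
      simp only [mexp_apply1] at h2
      omega
  · intro hmem
    simp only [Finset.mem_range] at hmem
    omega

lemma det_lt (d h k r σ : ℕ) (hh : 0 < h) (hrσ : r ≤ σ) (hσh : σ ≤ h)
    (hσd : σ + 2*h ≤ d) (hrhk : r + h ≤ k) (huk : (σ - r) + h + k ≤ d + 1) :
    d.choose σ * (d+1-σ).descFactorial (k-r) * σ.descFactorial r *
      (d.choose (σ+2*h) * (d+1-(σ+2*h)).descFactorial (k-(r+h)) * (σ+2*h).descFactorial (r+h))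
    < d.choose (σ+h) * (d+1-(σ+h)).descFactorial (k-(r+h)) * (σ+h).descFactorial (r+h) *
      (d.choose (σ+h) * (d+1-(σ+h)).descFactorial (k-r) * (σ+h).descFactorial r) := by
  have fact1 : ∀ a b : ℕ, b ≤ a → a.descFactorial b * (a - b).factorial = a.factorial := by
    intro a b hba
    rw [mul_comm]
    exact Nat.factorial_mul_descFactorial hba
  have helper : ∀ a b : ℕ, b ≤ a → a ≤ d → b ≤ k → k + a ≤ d + 1 + b →
      d.choose a * (d+1-a).descFactorial (k-b) * a.descFactorial b *
        ((a-b).factorial * (d+1-k-(a-b)).factorial) = d.factorial * (d+1-a) := by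
    intro a b hba had hbk hka
    have e1 : a.descFactorial b * (a-b).factorial = a.factorial := fact1 a b hba
    have e2 : (d+1-a).descFactorial (k-b) * (d+1-k-(a-b)).factorial = (d+1-a).factorial := by
      have hle : k - b ≤ d+1-a := by omega
      have := fact1 (d+1-a) (k-b) hle
      rwa [show (d+1-a) - (k-b) = d+1-k-(a-b) by omega] at this
    have e3 : (d+1-a).factorial = (d+1-a) * (d-a).factorial := by
      rw [show d+1-a = (d-a)+1 by omega, Nat.factorial_succ]
    have e4 : d.choose a * a.factorial * (d-a).factorial = d.factorial :=
      Nat.choose_mul_factorial_mul_factorial had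
    calc d.choose a * (d+1-a).descFactorial (k-b) * a.descFactorial b *
        ((a-b).factorial * (d+1-k-(a-b)).factorial)
        = d.choose a * (a.descFactorial b * (a-b).factorial) *
          ((d+1-a).descFactorial (k-b) * (d+1-k-(a-b)).factorial) := by ring
      _ = d.choose a * a.factorial * ((d+1-a) * (d-a).factorial) := by rw [e1, e2, e3]
      _ = (d.choose a * a.factorial * (d-a).factorial) * (d+1-a) := by ring
      _ = d.factorial * (d+1-a) := by rw [e4]
  set u := σ - r with hu
  set K1 := u.factorial * (d+1-k-u).factorial with hK1
  set K2 := (u+h).factorial * (d+1-k-(u+h)).factorial with hK2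
  have hA := helper σ r hrσ (by omega) (by omega) (by omega)
  have hB := helper (σ+h) (r+h) (by omega) (by omega) (by omega) (by omega)
  have hC := helper (σ+h) r (by omega) (by omega) (by omega) (by omega)
  have hD := helper (σ+2*h) (r+h) (by omega) (by omega) (by omega) (by omega)
  rw [show σ - r = u from rfl] at hA
  rw [show σ+h - (r+h) = u by omega] at hB
  rw [show σ+h - r = u+h by omega] at hC
  rw [show σ+2*h - (r+h) = u+h by omega] at hD
  set α := d.choose σ * (d+1-σ).descFactorial (k-r) * σ.descFactorial r with hα
  set β := d.choose (σ+h) * (d+1-(σ+h)).descFactorial (k-(r+h)) * (σ+h).descFactorial (r+h) with hβ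
  set γ := d.choose (σ+h) * (d+1-(σ+h)).descFactorial (k-r) * (σ+h).descFactorial r with hγ
  set δ := d.choose (σ+2*h) * (d+1-(σ+2*h)).descFactorial (k-(r+h)) * (σ+2*h).descFactorial (r+h) with hδ
  have key : (α * δ) * (K1 * K2) < (β * γ) * (K1 * K2) := by
    have eAD : (α * δ) * (K1 * K2) = (α * K1) * (δ * K2) := by ring
    have eBC : (β * γ) * (K1 * K2) = (β * K1) * (γ * K2) := by ring
    rw [eAD, eBC, hA, hB, hC, hD]
    obtain ⟨x, hx⟩ : ∃ x, d+1-(σ+2*h) = x + 1 := ⟨d-(σ+2*h), by omega⟩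
    rw [show d+1-σ = (x+1) + 2*h by omega, show d+1-(σ+h) = (x+1)+h by omega, hx]
    have hfp : 0 < d.factorial := Nat.factorial_pos d
    have expand : d.factorial * ((x+1)+2*h) * (d.factorial * (x+1)) +
        d.factorial * d.factorial * (h * h)
        = d.factorial * ((x+1)+h) * (d.factorial * ((x+1)+h)) := by ring
    have hpos : 0 < d.factorial * d.factorial * (h*h) :=
      Nat.mul_pos (Nat.mul_pos hfp hfp) (Nat.mul_pos hh hh)
    omega
  exact Nat.lt_of_mul_lt_mul_right key

set_option maxHeartbeats 1000000 in
lemma main3 (d h : ℕ) (hd : 0 < d) (hh : 0 < h) (hgen : 2 * h < (d + 3) / 2) :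
    2 * h ≤ Module.finrank ℂ (Hspan ((d + 1) / 2) (X 0 * Fpoly h d)) := by
  set k := (d + 1) / 2 with hk
  have h4 : 4 * h ≤ d + 2 := by omega
  have hk1 : 2 * h - 1 ≤ k := by omega
  have hk2 : 2 * h + k ≤ d + 2 := by omega
  set G : MvPolynomial (Fin 2) ℂ := X 0 * Fpoly h d with hG
  set v : Fin (2*h) → MvPolynomial (Fin 2) ℂ := fun b =>
    derivList (List.replicate (k - b.val) 0 ++ List.replicate b.val 1) G with hv
  have hvmem : ∀ b : Fin (2*h), v b ∈ Hspan k G := by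
    intro b
    apply Submodule.subset_span
    exact ⟨List.replicate (k - b.val) 0 ++ List.replicate b.val 1,
      by simp only [List.length_append, List.length_replicate]; omega, rfl⟩
  have hfin : FiniteDimensional ℂ (Hspan k G) := by
    apply FiniteDimensional.span_of_finite
    have hs : {P | ∃ l : List (Fin 2), l.length = k ∧ P = derivList l G} ⊆
        (fun l => derivList l G) '' {l : List (Fin 2) | l.length = k} := by
      rintro P ⟨l, hl, rfl⟩; exact ⟨l, hl, rfl⟩
    exact Set.Finite.subset ((List.finite_length_eq (Fin 2) k).image _) hs
  have hli : LinearIndependent ℂ v := by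
    rw [Fintype.linearIndependent_iff]
    intro g hg
    have hE : ∀ s : ℕ, s < 2*h →
        ∑ b : Fin (2*h), g b * (chi h d (s + b.val) *
          ((d+1-(s+b.val)).descFactorial (k-b.val) : ℂ) *
          ((s+b.val).descFactorial b.val : ℂ)) = 0 := by
      intro s hs
      have h0 := congrArg (MvPolynomial.coeff (mexp (d+1-k-s) s)) hg
      rw [MvPolynomial.coeff_sum] at h0
      simp only [MvPolynomial.coeff_smul, smul_eq_mul, MvPolynomial.coeff_zero] at h0
      rw [← h0]
      refine Finset.sum_congr rfl fun b _ => ?_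
      rw [hv]
      rw [coeff_Dpoly h d k b.val s (by omega) (by omega) (by omega)]
    intro i
    set r := i.val % h with hr
    have hrh : r < h := Nat.mod_lt _ hh
    have hiv : i.val = r ∨ i.val = r + h := by
      rcases Nat.lt_or_ge i.val h with hlt | hge
      · left; rw [hr, Nat.mod_eq_of_lt hlt]
      · right
        have hi2 : i.val < 2*h := i.isLt
        have : i.val - h < h := by omega
        rw [hr, show i.val = (i.val - h) + 1 * h by omega, Nat.add_mul_mod_self_right]
        rw [Nat.mod_eq_of_lt this]
        omega
    set u := if r = 0 then 0 else h - r with hu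
    have huprop : u < h ∧ (u + r = 0 ∨ u + r = h) := by
      by_cases h0 : r = 0 <;> simp [hu, h0] <;> omega
    set σ := u + r with hσ
    have hσprop : σ = 0 ∨ σ = h := huprop.2
    have hrfin : r < 2*h := by omega
    have hRfin : r + h < 2*h := by omega
    have hpair : ∀ s : ℕ, s = u ∨ s = u + h →
        g ⟨r, hrfin⟩ * (chi h d (s + r) *
          ((d+1-(s+r)).descFactorial (k-r) : ℂ) * ((s+r).descFactorial r : ℂ))
        + g ⟨r+h, hRfin⟩ * (chi h d (s + (r+h)) *
          ((d+1-(s+(r+h))).descFactorial (k-(r+h)) : ℂ) *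
          ((s+(r+h)).descFactorial (r+h) : ℂ))
        = 0 := by
      intro s hscase
      have hs2 : s < 2*h := by omega
      have := hE s hs2
      rw [← this]
      rw [show (Finset.univ : Finset (Fin (2*h))) =
        insert ⟨r, hrfin⟩ {⟨r+h, hRfin⟩} ∪ (Finset.univ \ insert ⟨r, hrfin⟩ {⟨r+h, hRfin⟩}) by
          rw [Finset.union_sdiff_of_subset (Finset.subset_univ _)]]
      rw [Finset.sum_union (Finset.disjoint_sdiff)]
      have hne : (⟨r, hrfin⟩ : Fin (2*h)) ≠ ⟨r+h, hRfin⟩ := by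
        intro e; have := Fin.mk.injEq .. ▸ e; simp at this; omega
      rw [Finset.sum_insert (by simp [hne]), Finset.sum_singleton]
      have hzero : ∑ b ∈ Finset.univ \ insert (⟨r, hrfin⟩ : Fin (2*h)) {⟨r+h, hRfin⟩},
          g b * (chi h d (s + b.val) *
          ((d+1-(s+b.val)).descFactorial (k-b.val) : ℂ) *
          ((s+b.val).descFactorial b.val : ℂ)) = 0 := by
        apply Finset.sum_eq_zero
        intro b hb
        simp only [Finset.mem_sdiff, Finset.mem_insert, Finset.mem_singleton] at hb
        have hbne : b.val ≠ r ∧ b.val ≠ r + h := by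
          constructor <;> intro e <;> apply hb.2
          · left; exact Fin.ext e
          · right; exact Fin.ext e
        have hchi : chi h d (s + b.val) = 0 := by
          rw [chi, if_neg]
          rintro ⟨c, hc⟩
          have hble : b.val < 2*h := b.isLt
          have hcle : c ≤ 3 := by nlinarith
          interval_cases c <;> omega
        rw [hchi]
        ring
      rw [hzero]
      ring
    have E1 := hpair u (Or.inl rfl)
    have E2 := hpair (u + h) (Or.inr rfl)
    have hdvd1 : h ∣ σ := by rcases hσprop with e | e <;> simp [e]
    have hdvd2 : h ∣ σ + h := Dvd.dvd.add hdvd1 dvd_rfl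
    have hdvd3 : h ∣ σ + 2*h := Dvd.dvd.add hdvd1 ⟨2, by ring⟩
    have hchi1 : chi h d σ = (d.choose σ : ℂ) := by rw [chi, if_pos hdvd1]
    have hchi2 : chi h d (σ+h) = (d.choose (σ+h) : ℂ) := by rw [chi, if_pos hdvd2]
    have hchi3 : chi h d (σ+2*h) = (d.choose (σ+2*h) : ℂ) := by rw [chi, if_pos hdvd3]
    rw [show u + r = σ from rfl, show u + (r+h) = σ + h by omega, hchi1, hchi2] at E1
    rw [show u + h + r = σ + h by omega, show u + h + (r+h) = σ + 2*h by omega,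
      hchi2, hchi3] at E2
    set α := d.choose σ * (d+1-σ).descFactorial (k-r) * σ.descFactorial r with hα
    set β := d.choose (σ+h) * (d+1-(σ+h)).descFactorial (k-(r+h)) *
      (σ+h).descFactorial (r+h) with hβ
    set γ := d.choose (σ+h) * (d+1-(σ+h)).descFactorial (k-r) * (σ+h).descFactorial r with hγ
    set δ := d.choose (σ+2*h) * (d+1-(σ+2*h)).descFactorial (k-(r+h)) *
      (σ+2*h).descFactorial (r+h) with hδ
    have E1' : g ⟨r, hrfin⟩ * (α : ℂ) + g ⟨r+h, hRfin⟩ * (β : ℂ) = 0 := by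
      rw [← E1]; push_cast [hα, hβ]; ring
    have E2' : g ⟨r, hrfin⟩ * (γ : ℂ) + g ⟨r+h, hRfin⟩ * (δ : ℂ) = 0 := by
      rw [← E2]; push_cast [hγ, hδ]; ring
    have hrσ : r ≤ σ := by omega
    have hσh : σ ≤ h := by omega
    have hσd : σ + 2*h ≤ d := by rcases hσprop with e | e <;> omega
    have hrhk : r + h ≤ k := by omega
    have huk : (σ - r) + h + k ≤ d + 1 := by omega
    have hlt := det_lt d h k r σ hh hrσ hσh hσd hrhk huk
    have hdet : (α : ℂ) * δ - β * γ ≠ 0 := by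
      intro e
      have : (α * δ : ℕ) = (β * γ : ℕ) := by
        have := sub_eq_zero.mp e
        exact_mod_cast this
      exact absurd this (Nat.ne_of_lt hlt)
    have hg1 : g ⟨r, hrfin⟩ = 0 := by
      have : g ⟨r, hrfin⟩ * ((α : ℂ) * δ - β * γ) = 0 := by
        linear_combination (δ : ℂ) * E1' - (β : ℂ) * E2'
      rcases mul_eq_zero.mp this with e | e
      · exact e
      · exact absurd e hdet
    have hg2 : g ⟨r+h, hRfin⟩ = 0 := by
      have : g ⟨r+h, hRfin⟩ * ((α : ℂ) * δ - β * γ) = 0 := by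
        linear_combination (α : ℂ) * E2' - (γ : ℂ) * E1'
      rcases mul_eq_zero.mp this with e | e
      · exact e
      · exact absurd e hdet
    rcases hiv with e | e
    · have : i = ⟨r, hrfin⟩ := Fin.ext e
      rw [this]; exact hg1
    · have : i = ⟨r+h, hRfin⟩ := Fin.ext e
      rw [this]; exact hg2
  have hw : LinearIndependent ℂ (fun b : Fin (2*h) => (⟨v b, hvmem b⟩ : Hspan k G)) :=
    LinearIndependent.of_comp (Hspan k G).subtype hli
  simpa using hw.fintype_card_le_finrank

/-- For positive integers `d, h` with `2h < ⌈(d+2)/2⌉ = g_{d+1}` there is a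
binary form `F` of degree `d` with `srk F ≤ h` such that the span of the
`⌊(d+1)/2⌋`-th order partial derivatives of `x₀F` has dimension at least `2h`
(equivalently, the middle Hankel/catalecticant matrix of `x₀F` has rank at least `2h`). -/
theorem binary_x0F_high_catalecticant (d h : ℕ) (hd : 0 < d) (hh : 0 < h)
    (hgen : 2 * h < (d + 3) / 2) :
    ∃ F : MvPolynomial (Fin 2) ℂ, F.IsHomogeneous d ∧ srk d F ≤ h ∧
      2 * h ≤ Module.finrank ℂ (Hspan ((d + 1) / 2) (X 0 * F)) :=
  ⟨Fpoly h d, Fpoly_homog h d, srk_Fpoly_le d h hh, main3 d h hd hh hgen⟩
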